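/- Let (X_i) be the two-graph Moran process where the resident graph G_R is undirected with max edge weight ratio c = max_{(xy)∈E_R} w^R_{xy}/w^R_{yx} and the mutant graph is the complete graph on n vertices, n ≥ 6. If r ≥ 2c(1 + 2/(n−5)), then for every nonempty proper mutant set S, the expected one-step change in the number of mutants satisfies E[|X_{i+1}| − |X_i| | X_i = S] ≥ (1 − c/r)/n > 0. -/

import Mathlib

open Finset

variable {V : Type*} [Fintype V] [DecidableEq V]

/-- One-step transition probability of the two-graph Moran process with relative fitness `r`,
resident weight matrix `wR` and mutant weight matrix `wM`, from mutant set `S` to set `T`.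
An individual is chosen with probability proportional to its fitness (residents `1`,
mutants `r`) and reproduces on a neighbour in its own graph. -/
noncomputable def moranStep (r : ℝ) (wR wM : V → V → ℝ) (S T : Finset V) : ℝ :=
  ((∑ i ∈ S, ∑ j ∈ Sᶜ, (if T = insert j S then r * wM i j else 0)) +
   (∑ j ∈ Sᶜ, ∑ i ∈ S, (if T = S.erase i then wR j i else 0)) +
   (if T = S then (∑ i ∈ S, ∑ j ∈ S, r * wM i j) + (∑ i ∈ Sᶜ, ∑ j ∈ Sᶜ, wR i j) else 0))
  / (S.card * r + ((Fintype.card V : ℝ) - S.card))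

/-- `t`-step transition probabilities of the two-graph Moran process. -/
noncomputable def moranIter (r : ℝ) (wR wM : V → V → ℝ) : ℕ → Finset V → Finset V → ℝ
  | 0 => fun S T => if T = S then 1 else 0
  | (t + 1) => fun S T => ∑ U : Finset V, moranStep r wR wM S U * moranIter r wR wM t U T

/-- Fixation probability of the two-graph Moran process started from mutant set `S`:
the probability of eventual absorption at the all-mutant state `V` (the probability of
being at the absorbing state `univ` is nondecreasing in `t`, so the limit is the `⨆`). -/
noncomputable def fixProbFrom (r : ℝ) (wR wM : V → V → ℝ) (S : Finset V) : ℝ :=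
  ⨆ t : ℕ, moranIter r wR wM t S Finset.univ

/-- Fixation probability of the two-graph Moran process started from a single
uniformly random mutant. -/
noncomputable def fixProb (r : ℝ) (wR wM : V → V → ℝ) : ℝ :=
  (∑ u : V, fixProbFrom r wR wM {u}) / (Fintype.card V)

/-- A weight matrix is a strongly connected graph structure: positive-weight edges
connect every ordered pair of vertices. -/
def StronglyConnectedW (w : V → V → ℝ) : Prop :=
  ∀ i j : V, Relation.ReflTransGen (fun a b => 0 < w a b) i j

/-- Admissible weight matrix: nonnegative, zero diagonal, rows sum to 1. -/
def IsWeightMatrix (w : V → V → ℝ) : Prop :=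
  (∀ i j, 0 ≤ w i j) ∧ (∀ i, w i i = 0) ∧ (∀ i, ∑ j, w i j = 1)

lemma moran_key_aux (c r K M : ℝ) (hc : 1 ≤ c) (hK : 1 ≤ K) (hM : 1 ≤ M)
    (hn : 6 ≤ K + M) (hr : r ≥ 2 * c * (1 + 2 / (K + M - 5))) :
    r * K * M / (K + M - 1) - c * min K M ≥ r - c := by
  have h5 : (0:ℝ) < K + M - 5 := by linarith
  have h1 : (0:ℝ) < K + M - 1 := by linarith
  have hr' : r * (K + M - 5) ≥ 2 * c * (K + M - 5) + 4 * c := by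
    have h2 : 2 * c * (1 + 2 / (K + M - 5)) * (K + M - 5) = 2 * c * (K + M - 5) + 4 * c := by
      field_simp; ring
    nlinarith [mul_le_mul_of_nonneg_right hr h5.le]
  rw [ge_iff_le, ← sub_nonneg]
  have key : ∀ A B : ℝ, 1 ≤ A → A ≤ B → A + B = K + M →
      0 ≤ r * A * B / (K + M - 1) - c * A - (r - c) := by
    intro A B hA hAB hsum
    have hB : 2 * B ≥ K + M := by linarith
    have h2 : c * (K + M - 1) ≤ r * (B - 1) := by
      nlinarith [mul_nonneg (by linarith : (0:ℝ) ≤ c) h5.le]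
    have h3 : 0 ≤ (A - 1) * (r * (B - 1) - c * (K + M - 1)) :=
      mul_nonneg (by linarith) (by linarith)
    have h4 : 0 ≤ r * A * B - (c * A + (r - c)) * (K + M - 1) := by nlinarith
    calc (0:ℝ) ≤ (r * A * B - (c * A + (r - c)) * (K + M - 1)) / (K + M - 1) :=
          div_nonneg h4 h1.le
      _ = r * A * B / (K + M - 1) - c * A - (r - c) := by field_simp; ring
  rcases le_total K M with h | h
  · have := key K M hK h rfl
    rw [min_eq_left h]; linarith
  · have h0 := key M K hM h (by ring)
    have heq : r * M * K / (K + M - 1) = r * K * M / (K + M - 1) := by ring_nf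
    rw [min_eq_right h]; linarith

lemma moran_sum_aux (r : ℝ) (wR wM : V → V → ℝ) (S : Finset V) :
    (∑ T : Finset V, moranStep r wR wM S T * ((T.card : ℝ) - (S.card : ℝ))) =
    ((∑ i ∈ S, ∑ j ∈ Sᶜ, r * wM i j) - ∑ j ∈ Sᶜ, ∑ i ∈ S, wR j i)
      / (S.card * r + ((Fintype.card V : ℝ) - S.card)) := by
  unfold moranStep
  simp_rw [div_mul_eq_mul_div]
  rw [← Finset.sum_div]
  congr 1
  simp_rw [add_mul, Finset.sum_add_distrib]
  have S1 : (∑ T : Finset V,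
      (∑ i ∈ S, ∑ j ∈ Sᶜ, (if T = insert j S then r * wM i j else 0)) * ((T.card : ℝ) - S.card))
      = ∑ i ∈ S, ∑ j ∈ Sᶜ, r * wM i j := by
    simp_rw [Finset.sum_mul, ite_mul, zero_mul]
    rw [Finset.sum_comm]
    refine Finset.sum_congr rfl fun i _ => ?_
    rw [Finset.sum_comm]
    refine Finset.sum_congr rfl fun j hj => ?_
    rw [Finset.sum_ite_eq' Finset.univ (insert j S)]
    have hjS : j ∉ S := by simpa using hj
    simp [Finset.card_insert_of_notMem hjS]
  have S2 : (∑ T : Finset V,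
      (∑ j ∈ Sᶜ, ∑ i ∈ S, (if T = S.erase i then wR j i else 0)) * ((T.card : ℝ) - S.card))
      = -∑ j ∈ Sᶜ, ∑ i ∈ S, wR j i := by
    rw [← Finset.sum_neg_distrib]
    simp_rw [Finset.sum_mul, ite_mul, zero_mul]
    rw [Finset.sum_comm]
    refine Finset.sum_congr rfl fun j _ => ?_
    rw [← Finset.sum_neg_distrib, Finset.sum_comm]
    refine Finset.sum_congr rfl fun i hi => ?_
    rw [Finset.sum_ite_eq' Finset.univ (S.erase i)]
    have h1 : 1 ≤ S.card := Finset.card_pos.mpr ⟨i, hi⟩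
    have : ((S.erase i).card : ℝ) = (S.card : ℝ) - 1 := by
      rw [Finset.card_erase_of_mem hi, Nat.cast_sub h1, Nat.cast_one]
    simp [this]
  have S3 : (∑ T : Finset V,
      (if T = S then (∑ i ∈ S, ∑ j ∈ S, r * wM i j) + (∑ i ∈ Sᶜ, ∑ j ∈ Sᶜ, wR i j) else 0)
        * ((T.card : ℝ) - S.card)) = 0 := by
    simp_rw [ite_mul, zero_mul]
    rw [Finset.sum_ite_eq' Finset.univ S]
    simp
  rw [S1, S2, S3]
  ring

/-- **Drift lemma.** For the two-graph Moran process with undirected resident graph `wR`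
whose adjacent weight ratios are at most `c`, and mutant graph the complete graph on
`n ≥ 6` vertices, if `r ≥ 2c(1 + 2/(n−5))` then for every nonempty proper mutant set `S`
the expected one-step change in the number of mutants is at least `(1 − c/r)/n > 0`. -/
theorem moran_drift_lemma
    {V : Type*} [Fintype V] [DecidableEq V]
    (hn : 6 ≤ Fintype.card V)
    (c r : ℝ) (hc : 0 < c)
    (hr : r ≥ 2 * c * (1 + 2 / ((Fintype.card V : ℝ) - 5)))
    (wR wM : V → V → ℝ)
    (hwR : IsWeightMatrix wR)
    (hundir : ∀ i j, 0 < wR i j ↔ 0 < wR j i)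
    (hratio : ∀ i j, 0 < wR i j → wR i j / wR j i ≤ c)
    (hwM : ∀ i j, wM i j = if i = j then 0 else 1 / ((Fintype.card V : ℝ) - 1))
    (S : Finset V) (hS : S.Nonempty) (hS' : S ≠ Finset.univ) :
    (0 : ℝ) < (1 - c / r) / (Fintype.card V : ℝ) ∧
    (∑ T : Finset V, moranStep r wR wM S T * ((T.card : ℝ) - (S.card : ℝ))) ≥
      (1 - c / r) / (Fintype.card V : ℝ) := by
  obtain ⟨hw0, hwd, hws⟩ := hwR
  set n := Fintype.card V with hnn
  have hnR : (6:ℝ) ≤ (n:ℝ) := by exact_mod_cast hn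
  -- c ≥ 1
  have hc1 : 1 ≤ c := by
    obtain ⟨i, hi⟩ := hS
    have hex : ∃ j, 0 < wR i j := by
      by_contra h
      push_neg at h
      have : ∑ j, wR i j = 0 := Finset.sum_eq_zero fun j _ => le_antisymm (h j) (hw0 i j)
      rw [hws i] at this; norm_num at this
    obtain ⟨j, hij⟩ := hex
    have hji : 0 < wR j i := (hundir i j).mp hij
    have h1 := hratio i j hij
    have h2 := hratio j i hji
    rw [div_le_iff₀ hji] at h1
    rw [div_le_iff₀ hij] at h2
    nlinarith
  have h5 : (0:ℝ) < (n:ℝ) - 5 := by linarith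
  have hx0 : (0:ℝ) ≤ 2 / ((n:ℝ) - 5) := by positivity
  have hrpos : (2:ℝ) ≤ r := by nlinarith
  have hcr : c < r := by nlinarith
  have hr0 : (0:ℝ) < r := by linarith
  -- cardinalities
  have hk1 : 1 ≤ S.card := Finset.card_pos.mpr hS
  have hkn : S.card < n := Finset.card_lt_card (lt_of_le_of_ne (Finset.subset_univ S)
    (by simpa using hS'))
  have hcompl : (Sᶜ).card = n - S.card := by
    rw [Finset.card_compl]
  set K := (S.card : ℝ) with hK
  set M := ((Sᶜ).card : ℝ) with hM
  have hKM : K + M = (n:ℝ) := by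
    rw [hK, hM, hcompl, Nat.cast_sub hkn.le]; ring
  have hK1 : 1 ≤ K := by rw [hK]; exact_mod_cast hk1
  have hM1 : 1 ≤ M := by
    rw [hM]
    have : 1 ≤ (Sᶜ).card := by
      rw [hcompl]; omega
    exact_mod_cast this
  have hn1 : (0:ℝ) < (n:ℝ) - 1 := by linarith
  -- the mutant-graph sum
  have hMsum : (∑ i ∈ S, ∑ j ∈ Sᶜ, r * wM i j) = r * K * M / ((n:ℝ) - 1) := by
    have : ∀ i ∈ S, ∀ j ∈ Sᶜ, r * wM i j = r / ((n:ℝ) - 1) := by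
      intro i hi j hj
      have hij : i ≠ j := by
        intro h; rw [h] at hi; exact (Finset.mem_compl.mp hj) hi
      rw [hwM i j, if_neg hij]
      field_simp
    rw [Finset.sum_congr rfl fun i hi => Finset.sum_congr rfl fun j hj => this i hi j hj]
    simp [Finset.sum_const]
    field_simp
    ring
  -- bounds on the resident loss term
  set L := ∑ j ∈ Sᶜ, ∑ i ∈ S, wR j i with hL
  have hL0 : L ≤ M := by
    rw [hM]
    calc L ≤ ∑ j ∈ Sᶜ, (1:ℝ) := by
          apply Finset.sum_le_sum
          intro j _
          calc ∑ i ∈ S, wR j i ≤ ∑ i, wR j i :=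
                Finset.sum_le_sum_of_subset_of_nonneg (Finset.subset_univ S)
                  (fun i _ _ => hw0 j i)
            _ = 1 := hws j
      _ = ((Sᶜ).card : ℝ) := by simp
  have hLK : L ≤ c * K := by
    have hpt : ∀ j i, wR j i ≤ c * wR i j := by
      intro j i
      rcases eq_or_lt_of_le (hw0 j i) with h | h
      · rw [← h]; exact mul_nonneg hc.le (hw0 i j)
      · have hij : 0 < wR i j := (hundir j i).mp h
        have := hratio j i h
        rw [div_le_iff₀ hij] at this
        linarith
    calc L ≤ ∑ j ∈ Sᶜ, ∑ i ∈ S, c * wR i j :=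
          Finset.sum_le_sum fun j _ => Finset.sum_le_sum fun i _ => hpt j i
      _ = c * ∑ i ∈ S, ∑ j ∈ Sᶜ, wR i j := by
          rw [Finset.sum_comm]; simp_rw [Finset.mul_sum]
      _ ≤ c * ∑ i ∈ S, (1:ℝ) := by
          apply mul_le_mul_of_nonneg_left _ hc.le
          apply Finset.sum_le_sum
          intro i _
          calc ∑ j ∈ Sᶜ, wR i j ≤ ∑ j, wR i j :=
                Finset.sum_le_sum_of_subset_of_nonneg (Finset.subset_univ Sᶜ)
                  (fun j _ _ => hw0 i j)
            _ = 1 := hws i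
      _ = c * K := by simp [hK]
  have hLmin : L ≤ c * min K M := by
    rcases le_total K M with h | h
    · rw [min_eq_left h]; exact hLK
    · rw [min_eq_right h]
      calc L ≤ M := hL0
        _ ≤ c * M := by nlinarith
  -- numerator bound
  have hnum : r * K * M / ((n:ℝ) - 1) - L ≥ r - c := by
    have := moran_key_aux c r K M hc1 hK1 hM1 (by rw [hKM]; exact hnR)
      (by rw [hKM]; exact hr)
    rw [hKM] at this
    linarith
  -- denominator
  set F := K * r + ((n:ℝ) - K) with hF
  have hFpos : 0 < F := by
    have : (0:ℝ) ≤ (n:ℝ) - K := by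
      rw [hK]
      have : (S.card : ℝ) ≤ (n : ℝ) := by exact_mod_cast hkn.le
      linarith
    nlinarith
  have hFle : F ≤ r * (n:ℝ) := by
    have h1 : (0:ℝ) ≤ (n:ℝ) - K := by
      have : (S.card : ℝ) ≤ (n : ℝ) := by exact_mod_cast hkn.le
      rw [hK]; linarith
    nlinarith
  have hgoal2 : (∑ T : Finset V, moranStep r wR wM S T * ((T.card : ℝ) - (S.card : ℝ))) ≥
      (1 - c / r) / (n:ℝ) := by
    rw [moran_sum_aux, hMsum]
    have hn0 : (0:ℝ) < (n:ℝ) := by linarith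
    have e1 : (1 - c / r) / (n:ℝ) = (r - c) / (r * (n:ℝ)) := by
      rw [div_eq_div_iff hn0.ne' (by positivity : (0:ℝ) < r * (n:ℝ)).ne']
      field_simp
    rw [e1]
    exact div_le_div₀ (by linarith) (by linarith) hFpos hFle
  constructor
  · apply div_pos
    · have : c / r < 1 := (div_lt_one hr0).mpr hcr
      linarith
    · linarith
  · exact hgoal2
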